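/- Let 𝔻 = {z ∈ ℂ : |z| < 1} be the open unit disk, let a ∈ 𝔻, and let T_a : 𝔻 → 𝔻 be the Möbius transformation T_a(z) = (z − a)/(1 − ā·z), which maps 𝔻 onto itself and sends a to 0. Then for all distinct x, y ∈ 𝔻, ((1−|a|)/(1+|a|)) · s_𝔻(x,y) ≤ s_𝔻(T_a(x), T_a(y)) ≤ ((1+|a|)/(1−|a|)) · s_𝔻(x,y). -/

import Mathlib

open Metric Set

noncomputable def moebT (a z : ℂ) : ℂ := (z - a) / (1 - (starRingEnd ℂ) a * z)

lemma moeb_denom_ne {a z : ℂ} (ha : ‖a‖ < 1) (hz : ‖z‖ ≤ 1) :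
    1 - (starRingEnd ℂ) a * z ≠ 0 := by
  intro h
  have h0 : (1 : ℂ) = (starRingEnd ℂ) a * z := by linear_combination h
  have h1 : ‖(starRingEnd ℂ) a * z‖ < 1 := by
    rw [norm_mul, RCLike.norm_conj]
    nlinarith [norm_nonneg z, norm_nonneg a]
  rw [← h0] at h1
  simp at h1

lemma moebK_ne {a : ℂ} (ha : ‖a‖ < 1) : (1 : ℂ) - (starRingEnd ℂ) a * a ≠ 0 := by
  have := moeb_denom_ne ha (le_of_lt ha)
  exact this

lemma moeb_norm_K {a : ℂ} (ha : ‖a‖ < 1) :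
    ‖(1 : ℂ) - (starRingEnd ℂ) a * a‖ = 1 - ‖a‖ ^ 2 := by
  have h : (starRingEnd ℂ) a * a = ((‖a‖ ^ 2 : ℝ) : ℂ) := by
    rw [mul_comm, Complex.mul_conj]
    norm_cast
    rw [Complex.normSq_eq_norm_sq]
  rw [h, show (1 : ℂ) - ((‖a‖ ^ 2 : ℝ) : ℂ) = (((1 - ‖a‖ ^ 2 : ℝ)) : ℂ) by push_cast; ring,
    Complex.norm_real, Real.norm_of_nonneg (by nlinarith [norm_nonneg a] : (0:ℝ) ≤ 1 - ‖a‖ ^ 2)]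

lemma moebT_sub (a x y : ℂ) (hx : 1 - (starRingEnd ℂ) a * x ≠ 0)
    (hy : 1 - (starRingEnd ℂ) a * y ≠ 0) :
    moebT a x - moebT a y =
      (x - y) * (1 - (starRingEnd ℂ) a * a) /
        ((1 - (starRingEnd ℂ) a * x) * (1 - (starRingEnd ℂ) a * y)) := by
  unfold moebT
  rw [div_sub_div _ _ hx hy]
  ring

lemma moeb_dist {a : ℂ} (ha : ‖a‖ < 1) {x y : ℂ} (hx : ‖x‖ ≤ 1) (hy : ‖y‖ ≤ 1) :
    dist (moebT a x) (moebT a y) =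
      (1 - ‖a‖ ^ 2) * dist x y /
        (‖1 - (starRingEnd ℂ) a * x‖ * ‖1 - (starRingEnd ℂ) a * y‖) := by
  rw [dist_eq_norm, dist_eq_norm, moebT_sub a x y (moeb_denom_ne ha hx) (moeb_denom_ne ha hy),
    norm_div, norm_mul, norm_mul, moeb_norm_K ha]
  ring

lemma moeb_D_bounds {a z : ℂ} (hz : ‖z‖ ≤ 1) :
    1 - ‖a‖ ≤ ‖1 - (starRingEnd ℂ) a * z‖ ∧ ‖1 - (starRingEnd ℂ) a * z‖ ≤ 1 + ‖a‖ := by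
  have h1 := norm_sub_norm_le (1 : ℂ) ((starRingEnd ℂ) a * z)
  have h2 := norm_sub_le (1 : ℂ) ((starRingEnd ℂ) a * z)
  rw [norm_mul, RCLike.norm_conj] at h1 h2
  simp only [norm_one] at h1 h2
  constructor <;> nlinarith [norm_nonneg a, norm_nonneg z]

lemma moebT_ne {a x y : ℂ} (ha : ‖a‖ < 1) (hx : ‖x‖ ≤ 1) (hy : ‖y‖ ≤ 1) (hxy : x ≠ y) :
    moebT a x ≠ moebT a y := by
  intro h
  have h0 : moebT a x - moebT a y = 0 := sub_eq_zero.mpr h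
  rw [moebT_sub a x y (moeb_denom_ne ha hx) (moeb_denom_ne ha hy)] at h0
  have := div_eq_zero_iff.mp h0
  rcases this with h1 | h1
  · rcases mul_eq_zero.mp h1 with h2 | h2
    · exact hxy (sub_eq_zero.mp h2)
    · exact moebK_ne ha h2
  · exact mul_ne_zero (moeb_denom_ne ha hx) (moeb_denom_ne ha hy) h1

lemma moebT_sphere {a z : ℂ} (ha : ‖a‖ < 1) (hz : ‖z‖ = 1) : ‖moebT a z‖ = 1 := by
  have hzz : z * (starRingEnd ℂ) z = 1 := by
    rw [Complex.mul_conj]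
    norm_cast
    rw [Complex.normSq_eq_norm_sq, hz]; norm_num
  have h1 : z - a = z * (1 - a * (starRingEnd ℂ) z) := by linear_combination a * hzz
  have key : ‖z - a‖ = ‖1 - (starRingEnd ℂ) a * z‖ := by
    have h2 : (starRingEnd ℂ) (1 - a * (starRingEnd ℂ) z) = 1 - (starRingEnd ℂ) a * z := by
      simp [map_sub, map_mul]
    calc ‖z - a‖ = ‖z‖ * ‖1 - a * (starRingEnd ℂ) z‖ := by rw [h1, norm_mul]
      _ = ‖(starRingEnd ℂ) (1 - a * (starRingEnd ℂ) z)‖ := by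
          rw [hz, one_mul, RCLike.norm_conj]
      _ = ‖1 - (starRingEnd ℂ) a * z‖ := by rw [h2]
  unfold moebT
  rw [norm_div, key, div_self (norm_ne_zero_iff.mpr (moeb_denom_ne ha (le_of_eq hz)))]

lemma moebT_inv {a w : ℂ} (ha : ‖a‖ < 1) (hw : ‖w‖ = 1) : moebT a (moebT (-a) w) = w := by
  have hu : 1 - (starRingEnd ℂ) (-a) * w ≠ 0 :=
    moeb_denom_ne (by simpa using ha) (le_of_eq hw)
  have hu' : 1 + (starRingEnd ℂ) a * w ≠ 0 := by
    rw [map_neg] at hu; intro h; apply hu; linear_combination h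
  have hK := moebK_ne ha
  have e1 : moebT (-a) w = (w + a) / (1 + (starRingEnd ℂ) a * w) := by
    unfold moebT; rw [map_neg]; ring_nf
  have e2 : 1 - (starRingEnd ℂ) a * ((w + a) / (1 + (starRingEnd ℂ) a * w)) =
      (1 - (starRingEnd ℂ) a * a) / (1 + (starRingEnd ℂ) a * w) := by
    field_simp; ring
  calc moebT a (moebT (-a) w) = moebT a ((w + a) / (1 + (starRingEnd ℂ) a * w)) := by rw [e1]
    _ = w := by
        unfold moebT
        rw [e2]
        rw [div_eq_iff (div_ne_zero hK hu'), div_sub' hu', mul_div_assoc', div_left_inj' hu']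
        ring

lemma moeb_real_key {m dxy A B Dx Dy Dz : ℝ} (hm0 : 0 ≤ m) (hm1 : m < 1)
    (hd : 0 < dxy) (hAB : dxy ≤ A + B) (hA : 0 ≤ A) (hB : 0 ≤ B)
    (hDx1 : 1 - m ≤ Dx) (hDx2 : Dx ≤ 1 + m)
    (hDy1 : 1 - m ≤ Dy) (hDy2 : Dy ≤ 1 + m)
    (hDz1 : 1 - m ≤ Dz) (hDz2 : Dz ≤ 1 + m) :
    (1 - m) / (1 + m) * (dxy / (A + B)) ≤ dxy * Dz / (A * Dy + B * Dx) ∧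
      dxy * Dz / (A * Dy + B * Dx) ≤ (1 + m) / (1 - m) * (dxy / (A + B)) := by
  have hABpos : 0 < A + B := lt_of_lt_of_le hd hAB
  have hden : 0 < A * Dy + B * Dx := by nlinarith
  have h1 : A * Dy + B * Dx ≤ (1 + m) * (A + B) := by nlinarith
  have h2 : (1 - m) * (A + B) ≤ A * Dy + B * Dx := by nlinarith
  constructor
  · rw [div_mul_div_comm, div_le_div_iff₀ (by positivity) hden]
    nlinarith [mul_le_mul_of_nonneg_left h1 (mul_nonneg (by linarith : (0:ℝ) ≤ 1 - m) hd.le),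
      mul_le_mul_of_nonneg_right hDz1 (mul_nonneg hd.le (mul_nonneg (by linarith : (0:ℝ) ≤ 1 + m) hABpos.le))]
  · rw [div_mul_div_comm, div_le_div_iff₀ hden (by nlinarith)]
    nlinarith [mul_le_mul_of_nonneg_left h2 (mul_nonneg (by linarith : (0:ℝ) ≤ 1 + m) hd.le),
      mul_le_mul_of_nonneg_right hDz2 (mul_nonneg hd.le (mul_nonneg (by linarith : (0:ℝ) ≤ 1 - m) hABpos.le))]

lemma moeb_div_frac (K dxy A B Dx Dy Dz : ℝ) (hK : K ≠ 0) (hDx : Dx ≠ 0) (hDy : Dy ≠ 0)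
    (hDz : Dz ≠ 0) (hden : A * Dy + B * Dx ≠ 0) :
    K * dxy / (Dx * Dy) / (K * A / (Dx * Dz) + K * B / (Dz * Dy)) =
      dxy * Dz / (A * Dy + B * Dx) := by
  have h1 : K * A / (Dx * Dz) + K * B / (Dz * Dy) =
      K * (A * Dy + B * Dx) / (Dx * Dz * Dy) := by
    field_simp
  rw [h1, div_div_div_eq]
  rw [div_eq_div_iff (by
      exact mul_ne_zero (mul_ne_zero hDx hDy) (mul_ne_zero hK hden)) hden]
  ring

lemma moeb_key {a x y z : ℂ} (ha : ‖a‖ < 1) (hx : ‖x‖ ≤ 1) (hy : ‖y‖ ≤ 1) (hxy : x ≠ y)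
    (hz : ‖z‖ = 1) :
    (1 - ‖a‖) / (1 + ‖a‖) * (dist x y / (dist x z + dist z y)) ≤
      dist (moebT a x) (moebT a y) /
        (dist (moebT a x) (moebT a z) + dist (moebT a z) (moebT a y)) ∧
    dist (moebT a x) (moebT a y) /
        (dist (moebT a x) (moebT a z) + dist (moebT a z) (moebT a y)) ≤
      (1 + ‖a‖) / (1 - ‖a‖) * (dist x y / (dist x z + dist z y)) := by
  have hz1 : ‖z‖ ≤ 1 := le_of_eq hz
  set Dx := ‖1 - (starRingEnd ℂ) a * x‖ with hDx
  set Dy := ‖1 - (starRingEnd ℂ) a * y‖ with hDy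
  set Dz := ‖1 - (starRingEnd ℂ) a * z‖ with hDz
  have hDxb := moeb_D_bounds (a := a) hx
  have hDyb := moeb_D_bounds (a := a) hy
  have hDzb := moeb_D_bounds (a := a) hz1
  have hma : ‖a‖ < 1 := ha
  have hm0 : (0:ℝ) ≤ ‖a‖ := norm_nonneg a
  have hDxp : 0 < Dx := by linarith [hDxb.1]
  have hDyp : 0 < Dy := by linarith [hDyb.1]
  have hDzp : 0 < Dz := by linarith [hDzb.1]
  have hK : (0:ℝ) < 1 - ‖a‖ ^ 2 := by nlinarith
  have hd : 0 < dist x y := dist_pos.mpr hxy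
  have hAB : dist x y ≤ dist x z + dist z y := dist_triangle x z y
  have hA : 0 ≤ dist x z := dist_nonneg
  have hB : 0 ≤ dist z y := dist_nonneg
  have hden : 0 < dist x z * Dy + dist z y * Dx := by nlinarith [hDxb.1, hDyb.1]
  have heq : dist (moebT a x) (moebT a y) /
      (dist (moebT a x) (moebT a z) + dist (moebT a z) (moebT a y)) =
      dist x y * Dz / (dist x z * Dy + dist z y * Dx) := by
    rw [moeb_dist ha hx hy, moeb_dist ha hx hz1, moeb_dist ha hz1 hy]
    exact moeb_div_frac _ _ _ _ _ _ _ (ne_of_gt hK) (ne_of_gt hDxp) (ne_of_gt hDyp)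
      (ne_of_gt hDzp) (ne_of_gt hden)
  rw [heq]
  exact moeb_real_key hm0 hma hd hAB hA hB hDxb.1 hDxb.2 hDyb.1 hDyb.2 hDzb.1 hDzb.2

/-- The triangular ratio metric in the plane:
`s_G(x,y) = sup_{z ∈ ∂G} |x-y|/(|x-z|+|z-y|)`. -/
noncomputable def triangularRatioC (G : Set ℂ) (x y : ℂ) : ℝ :=
  ⨆ z : frontier G, dist x y / (dist x z.1 + dist z.1 y)

lemma tri_eq_sphere (x y : ℂ) :
    triangularRatioC (Metric.ball (0 : ℂ) 1) x y =
      ⨆ z : Metric.sphere (0 : ℂ) 1, dist x y / (dist x z.1 + dist z.1 y) := by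
  rw [triangularRatioC, frontier_ball (0 : ℂ) one_ne_zero]

/-- For the Möbius self-map `T_a(z) = (z-a)/(1-ā z)` of the unit disk 𝔻 and all distinct
`x, y ∈ 𝔻`:
`((1-|a|)/(1+|a|)) s_𝔻(x,y) ≤ s_𝔻(T_a x, T_a y) ≤ ((1+|a|)/(1-|a|)) s_𝔻(x,y)`. -/
theorem s_disk_moebius_bilipschitz (a : ℂ) (ha : ‖a‖ < 1)
    (x y : ℂ) (hx : x ∈ Metric.ball (0 : ℂ) 1) (hy : y ∈ Metric.ball (0 : ℂ) 1) (hxy : x ≠ y) :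
    ((1 - ‖a‖) / (1 + ‖a‖)) * triangularRatioC (Metric.ball (0 : ℂ) 1) x y ≤
        triangularRatioC (Metric.ball (0 : ℂ) 1)
          ((x - a) / (1 - (starRingEnd ℂ) a * x)) ((y - a) / (1 - (starRingEnd ℂ) a * y)) ∧
      triangularRatioC (Metric.ball (0 : ℂ) 1)
          ((x - a) / (1 - (starRingEnd ℂ) a * x)) ((y - a) / (1 - (starRingEnd ℂ) a * y)) ≤
        ((1 + ‖a‖) / (1 - ‖a‖)) * triangularRatioC (Metric.ball (0 : ℂ) 1) x y := by
  have hx1 : ‖x‖ ≤ 1 := le_of_lt (mem_ball_zero_iff.mp hx)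
  have hy1 : ‖y‖ ≤ 1 := le_of_lt (mem_ball_zero_iff.mp hy)
  have hm0 : (0:ℝ) ≤ ‖a‖ := norm_nonneg a
  have hTxy : moebT a x ≠ moebT a y := moebT_ne ha hx1 hy1 hxy
  have hTd : 0 < dist (moebT a x) (moebT a y) := dist_pos.mpr hTxy
  have hd : 0 < dist x y := dist_pos.mpr hxy
  have hE : (x - a) / (1 - (starRingEnd ℂ) a * x) = moebT a x := rfl
  have hE' : (y - a) / (1 - (starRingEnd ℂ) a * y) = moebT a y := rfl
  rw [hE, hE', tri_eq_sphere, tri_eq_sphere]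
  haveI : Nonempty (Metric.sphere (0 : ℂ) 1) := ⟨⟨1, by simp⟩⟩
  set F : Metric.sphere (0 : ℂ) 1 → ℝ :=
    fun z => dist x y / (dist x z.1 + dist z.1 y) with hF
  set Gf : Metric.sphere (0 : ℂ) 1 → ℝ :=
    fun w => dist (moebT a x) (moebT a y) /
      (dist (moebT a x) w.1 + dist w.1 (moebT a y)) with hGf
  have hFb : BddAbove (Set.range F) := by
    refine ⟨1, ?_⟩
    rintro _ ⟨z, rfl⟩
    exact div_le_one_of_le₀ (dist_triangle x z.1 y)
      (le_trans hd.le (dist_triangle x z.1 y))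
  have hGb : BddAbove (Set.range Gf) := by
    refine ⟨1, ?_⟩
    rintro _ ⟨w, rfl⟩
    exact div_le_one_of_le₀ (dist_triangle (moebT a x) w.1 (moebT a y))
      (le_trans hTd.le (dist_triangle (moebT a x) w.1 (moebT a y)))
  have hc : (0:ℝ) < (1 - ‖a‖) / (1 + ‖a‖) := by
    apply div_pos <;> linarith
  have hC : (0:ℝ) ≤ (1 + ‖a‖) / (1 - ‖a‖) := div_nonneg (by linarith) (by linarith)
  constructor
  · rw [mul_comm, ← le_div_iff₀ hc]
    apply ciSup_le
    intro z
    have hz : ‖z.1‖ = 1 := mem_sphere_zero_iff_norm.mp z.2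
    have hk := (moeb_key ha hx1 hy1 hxy hz).1
    have hmem : moebT a z.1 ∈ Metric.sphere (0 : ℂ) 1 :=
      mem_sphere_zero_iff_norm.mpr (moebT_sphere ha hz)
    have hle := le_ciSup hGb (⟨moebT a z.1, hmem⟩ : Metric.sphere (0 : ℂ) 1)
    rw [le_div_iff₀ hc]
    calc F z * ((1 - ‖a‖) / (1 + ‖a‖))
        = (1 - ‖a‖) / (1 + ‖a‖) * (dist x y / (dist x z.1 + dist z.1 y)) := by
          rw [mul_comm]
      _ ≤ dist (moebT a x) (moebT a y) /
            (dist (moebT a x) (moebT a z.1) + dist (moebT a z.1) (moebT a y)) := hk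
      _ ≤ iSup Gf := hle
  · apply ciSup_le
    intro w
    have hw : ‖w.1‖ = 1 := mem_sphere_zero_iff_norm.mp w.2
    have hz : ‖moebT (-a) w.1‖ = 1 := moebT_sphere (by simpa using ha) hw
    have hTz : moebT a (moebT (-a) w.1) = w.1 := moebT_inv ha hw
    have hk := (moeb_key ha hx1 hy1 hxy hz).2
    rw [hTz] at hk
    have hmem : moebT (-a) w.1 ∈ Metric.sphere (0 : ℂ) 1 := mem_sphere_zero_iff_norm.mpr hz
    have hle := le_ciSup hFb (⟨moebT (-a) w.1, hmem⟩ : Metric.sphere (0 : ℂ) 1)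
    calc Gf w ≤ (1 + ‖a‖) / (1 - ‖a‖) *
          (dist x y / (dist x (moebT (-a) w.1) + dist (moebT (-a) w.1) y)) := hk
      _ ≤ (1 + ‖a‖) / (1 - ‖a‖) * iSup F := by
          exact mul_le_mul_of_nonneg_left hle hC
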